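/- arXiv:2302.06104 — 2 statements merged into one kernel-verified Lean document; each statement's English description precedes it below -/
import Mathlib

section
/- For every positive integer n and every m ≥ 1, the number of partitions of n into odd parts that use exactly m distinct part sizes equals the number of partitions of n into distinct parts that decompose into exactly m maximal runs of consecutive integers. -/
/-- The parts of a partition, listed in weakly decreasing order. -/
def plist {n : ℕ} (p : n.Partition) : List ℕ := (p.parts.sort (· ≤ ·)).reverse

/-- The distinct parts of a partition, listed in strictly decreasing order. -/
def dparts {n : ℕ} (p : n.Partition) : List ℕ := (p.parts.toFinset.sort (· ≤ ·)).reverse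

/-- The number of maximal runs of consecutive integers in a (strictly decreasing) list. -/
def runs : List ℕ → ℕ
  | [] => 0
  | [_] => 1
  | a :: b :: t => (if b + 1 < a then 1 else 0) + runs (b :: t)

/-- Bessenrodt's multiplicity pattern `j, r-j, j, r-j, …` over strictly
decreasing distinct part sizes. -/
def RPpat {n : ℕ} (r j : ℕ) (p : n.Partition) : Prop :=
  ∀ i < (dparts p).length,
    Multiset.count ((dparts p).getD i 0) p.parts = if i % 2 = 0 then j else r - j

/-- The repeating multiplicity pattern `s 1 - s 0, s 2 - s 1, …, s t - s (t-1), s 1 - s 0, …`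
over strictly decreasing distinct part sizes. -/
def RPgen {n : ℕ} (t : ℕ) (s : ℕ → ℕ) (p : n.Partition) : Prop :=
  ∀ i < (dparts p).length,
    Multiset.count ((dparts p).getD i 0) p.parts = s (i % t + 1) - s (i % t)

/-- The class-regular side of the generalized Bessenrodt identity:
conditions (a), (b), (c) on quotients and residues of the parts mod `r`. -/
def CPgen {n : ℕ} (r t : ℕ) (s : ℕ → ℕ) (p : n.Partition) : Prop :=
  (∀ k ∈ p.parts, ∃ j, 0 < j ∧ j < t ∧ k % r = s j) ∧
  (∀ i < (plist p).length, i + 1 ≤ (plist p).getD i 0 / r →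
    (plist p).getD i 0 % r = s (t - 1) ∧
    ∀ a, 0 < a → a < t - 1 → ∃ k < (plist p).length,
      (plist p).getD k 0 / r = i ∧ (plist p).getD k 0 % r = s a) ∧
  (∀ i < (plist p).length, (plist p).getD i 0 / r = i →
    ∀ j < t, (plist p).getD i 0 % r = s j →
      ∀ a, 0 < a → a < j → ∃ k < (plist p).length,
        (plist p).getD k 0 / r = i ∧ (plist p).getD k 0 % r = s a)

/-- count of distinct values in a weakly decreasing list -/
def dcount : List ℕ → ℕ
  | [] => 0
  | [_] => 1
  | a :: b :: t => (if b < a then 1 else 0) + dcount (b :: t)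

def sylv : List ℕ → List ℕ
  | [] => []
  | x :: t =>
    if x = 1 then [t.length + 1]
    else
      (t.length + 1 + (x - 1) / 2) ::
        ((x - 1) / 2 + ((t.filter (fun y => 3 ≤ y)).map (· - 2)).length) ::
        sylv ((t.filter (fun y => 3 ≤ y)).map (· - 2))
  termination_by l => l.length
  decreasing_by
    simp only [List.length_map, List.length_cons]
    exact Nat.lt_succ_of_le ((List.length_filter_le _ _).trans (by simp))

def sylvInv : List ℕ → List ℕ
  | [] => []
  | [a] => List.replicate a 1
  | a :: b :: rest =>
    (2 * (b - (sylvInv rest).length) + 1) ::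
      ((sylvInv rest).map (· + 2) ++
        List.replicate (a - (b - (sylvInv rest).length) - 1 - (sylvInv rest).length) 1)

def OddDec (l : List ℕ) : Prop := l.Pairwise (· ≥ ·) ∧ ∀ x ∈ l, Odd x
lemma dcount_rep_one (k : ℕ) : dcount (1 :: List.replicate k 1) = 1 := by
  induction k with
  | zero => rfl
  | succ k ih => simpa [List.replicate_succ, dcount] using ih

lemma dcount_map_add_two (l : List ℕ) : dcount (l.map (· + 2)) = dcount l := by
  induction l with
  | nil => rfl
  | cons a t ih =>
    cases t with
    | nil => rfl
    | cons b t' =>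
      simp only [List.map_cons, dcount] at ih ⊢
      rw [ih]
      by_cases hba : b < a
      · simp [hba, show b + 2 < a + 2 by omega]
      · simp [hba, show ¬ (b + 2 < a + 2) by omega]

lemma dcount_append_ones (A : List ℕ) (c : ℕ) (hA : ∀ x ∈ A, 2 ≤ x) :
    dcount (A ++ List.replicate c 1) = dcount A + (if c = 0 then 0 else 1) := by
  induction A with
  | nil =>
    cases c with
    | zero => simp [dcount]
    | succ c => simp [List.replicate_succ, dcount_rep_one, dcount]
  | cons a t ih =>
    cases t with
    | nil =>
      cases c with
      | zero => simp [dcount]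
      | succ c =>
        have ha : 2 ≤ a := hA a (by simp)
        simp [List.replicate_succ, dcount, dcount_rep_one, show (1:ℕ) < a by omega]
    | cons b t' =>
      have hstep : ∀ x ∈ b :: t', 2 ≤ x := fun x hx => hA x (List.mem_cons_of_mem _ hx)
      have h2 := ih hstep
      simp only [List.cons_append, dcount, List.append_eq] at h2 ⊢
      omega

lemma OddDec.tail {x : ℕ} {t : List ℕ} (h : OddDec (x :: t)) : OddDec t :=
  ⟨(List.pairwise_cons.1 h.1).2, fun y hy => h.2 y (List.mem_cons_of_mem _ hy)⟩

lemma OddDec.head_ge {x : ℕ} {t : List ℕ} (h : OddDec (x :: t)) : ∀ y ∈ t, y ≤ x :=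
  (List.pairwise_cons.1 h.1).1

lemma odd_cases {x : ℕ} (h : Odd x) : x = 1 ∨ (3 ≤ x ∧ x = 2 * ((x - 1) / 2) + 1) := by
  obtain ⟨k, rfl⟩ := h
  omega

lemma odd_val {x : ℕ} (h : Odd x) : x = 2 * ((x - 1) / 2) + 1 := by
  obtain ⟨k, rfl⟩ := h; omega

/-- all-ones case -/
lemma oddDec_head_one {t : List ℕ} (h : OddDec (1 :: t)) : t = List.replicate t.length 1 := by
  rw [List.eq_replicate_iff]
  refine ⟨rfl, fun y hy => ?_⟩
  have h1 := h.head_ge y hy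
  have h2 := h.2 y (List.mem_cons_of_mem _ hy)
  have := h2.pos
  omega

lemma oddDec_decomp {t : List ℕ} (h : OddDec t) :
    t = t.filter (fun y => 3 ≤ y) ++ List.replicate (t.count 1) 1 := by
  induction t with
  | nil => simp
  | cons y t' ih =>
    rcases odd_cases (h.2 y (by simp)) with rfl | ⟨h3, _⟩
    · have ht' := oddDec_head_one h
      have hlen : (1 :: t').count 1 = t'.length + 1 := by
        rw [List.count_cons]
        nth_rewrite 1 [ht']
        simp [List.count_replicate]
      have hf : (1 :: t').filter (fun y => 3 ≤ y) = [] := by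
        rw [List.filter_eq_nil_iff]
        intro a ha
        rcases List.mem_cons.1 ha with rfl | ha'
        · simp
        · have := h.head_ge a ha'
          have := (h.2 a ha).pos
          simp; omega
      rw [hf, hlen, List.nil_append]
      nth_rewrite 1 [ht']
      rw [← List.replicate_succ]
    · have := ih h.tail
      have hc : (y :: t').count 1 = t'.count 1 := by
        rw [List.count_cons]; simp; omega
      have hf : (y :: t').filter (fun y => 3 ≤ y) = y :: t'.filter (fun y => 3 ≤ y) := by
        rw [List.filter_cons, if_pos (by simpa using h3)]
      rw [hf, hc, List.cons_append]
      exact congrArg _ this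

abbrev flt (t : List ℕ) : List ℕ := t.filter (fun y => 3 ≤ y)
abbrev low (t : List ℕ) : List ℕ := (flt t).map (· - 2)

lemma flt_eq_map (t : List ℕ) : flt t = (low t).map (· + 2) := by
  rw [List.map_map]
  symm
  calc List.map ((fun x => x + 2) ∘ fun x => x - 2) (flt t)
      = List.map id (flt t) := List.map_congr_left (fun x hx => by
        have := List.of_mem_filter hx
        simp at this ⊢
        omega)
    _ = flt t := List.map_id _

lemma low_oddDec {t : List ℕ} (h : OddDec t) : OddDec (low t) := by
  constructor
  · exact (h.1.sublist List.filter_sublist).map _ (fun a b hab => by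
      simp at hab ⊢; omega)
  · intro x hx
    simp only [low, List.mem_map] at hx
    obtain ⟨y, hy, rfl⟩ := hx
    have h3 : 3 ≤ y := by simpa using List.of_mem_filter hy
    obtain ⟨k, hk⟩ := h.2 y (List.mem_of_mem_filter hy)
    exact ⟨k - 1, by omega⟩

lemma low_length_sum {t : List ℕ} (h : OddDec t) :
    t.length = (low t).length + t.count 1 ∧
    t.sum = (low t).sum + 2 * (low t).length + t.count 1 := by
  have hd := oddDec_decomp h
  constructor
  · nth_rewrite 1 [hd]
    simp [low]
  · nth_rewrite 1 [hd]
    rw [List.sum_append, List.sum_replicate, show List.filter (fun y => decide (3 ≤ y)) t = flt t from rfl, flt_eq_map]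
    have : ∀ (L : List ℕ), (L.map (· + 2)).sum = L.sum + 2 * L.length := by
      intro L; induction L with
      | nil => simp
      | cons a t ih => simp [ih]; omega
    rw [this]
    simp [low, smul_eq_mul]

lemma filter_ne_nil_head {t : List ℕ} (h : OddDec t) (hne : flt t ≠ []) :
    ∃ th tt, t = th :: tt ∧ 3 ≤ th ∧ Odd th ∧ flt t = th :: flt tt := by
  cases t with
  | nil => simp at hne
  | cons th tt =>
    have hodd := h.2 th (by simp)
    rcases odd_cases hodd with rfl | ⟨h3, _⟩
    · exfalso
      apply hne
      rw [List.filter_eq_nil_iff]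
      intro a ha
      rcases List.mem_cons.1 ha with rfl | ha'
      · simp
      · have := h.head_ge a ha'
        have := (h.2 a ha).pos
        simp; omega
    · refine ⟨th, tt, rfl, h3, hodd, ?_⟩
      show List.filter _ (th :: tt) = _
      rw [List.filter_cons, if_pos (by simpa using h3)]
lemma dcount_cons_rep_one {x : ℕ} (hx : 1 < x) (c : ℕ) :
    dcount (x :: List.replicate c 1) = 1 + (if c = 0 then 0 else 1) := by
  cases c with
  | zero => simp [dcount]
  | succ c => simp [List.replicate_succ, dcount, dcount_rep_one, hx]

lemma sylv_spec : ∀ (N : ℕ) (l : List ℕ), l.length ≤ N → OddDec l →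
    (sylv l).sum = l.sum ∧
    (sylv l).Pairwise (· > ·) ∧ (∀ x ∈ sylv l, 0 < x) ∧
    runs (sylv l) = dcount l ∧
    sylvInv (sylv l) = l ∧
    (l ≠ [] → (sylv l).head! = l.length + (l.head! - 1) / 2 ∧ sylv l ≠ []) := by
  intro N
  induction N with
  | zero =>
    intro l hl _
    have : l = [] := List.length_eq_zero_iff.1 (Nat.le_zero.1 hl)
    subst this
    simp [sylv, runs, dcount, sylvInv]
  | succ N ih =>
    intro l hl h
    cases l with
    | nil => simp [sylv, runs, dcount, sylvInv]
    | cons x t =>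
      rcases odd_cases (h.2 x (by simp)) with rfl | ⟨h3, hx⟩
      · -- all parts are 1
        have ht : t = List.replicate t.length 1 := oddDec_head_one h
        have hs : sylv (1 :: t) = [t.length + 1] := by rw [sylv.eq_2]; simp
        refine ⟨?_, ?_, ?_, ?_, ?_, ?_⟩
        · rw [hs]
          nth_rewrite 2 [ht]
          simp [List.sum_replicate]
          omega
        · rw [hs]; simp
        · rw [hs]; simp
        · rw [hs]
          show runs [t.length + 1] = _
          nth_rewrite 2 [ht]
          rw [runs]
          exact (dcount_rep_one t.length).symm
        · rw [hs]
          show sylvInv [t.length + 1] = _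
          rw [sylvInv, List.replicate_succ, ← ht]
        · intro _
          rw [hs]
          simp
      · -- x ≥ 3
        have hx1 : x ≠ 1 := by omega
        have hlen : (low t).length ≤ t.length := by
          show ((flt t).map _).length ≤ _
          rw [List.length_map]
          exact List.length_filter_le _ t
        have hlN : t.length ≤ N := by simp at hl; omega
        have hIH := ih (low t) (le_trans hlen hlN) (low_oddDec h.tail)
        obtain ⟨ihsum, ihsorted, ihpos, ihruns, ihinv, ihhead⟩ := hIH
        obtain ⟨hlent, hsumt⟩ := low_length_sum h.tail
        have hv1 : 1 ≤ (x - 1) / 2 := by omega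
        have hs : sylv (x :: t) = (t.length + 1 + (x - 1) / 2) ::
            ((x - 1) / 2 + (low t).length) :: sylv (low t) := by
          rw [sylv.eq_2, if_neg hx1]
        have hdecomp : t = flt t ++ List.replicate (t.count 1) 1 := oddDec_decomp h.tail
        have hfltmap : flt t = (low t).map (· + 2) := flt_eq_map t
        have hLelt : ∀ y ∈ low t, Odd y ∧ y + 2 ≤ x := by
          intro y hy
          refine ⟨(low_oddDec h.tail).2 y hy, ?_⟩
          simp only [low, List.mem_map] at hy
          obtain ⟨z, hz, rfl⟩ := hy
          have h3z : 3 ≤ z := by simpa using List.of_mem_filter hz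
          have := h.head_ge z (List.mem_of_mem_filter hz)
          omega
        refine ⟨?_, ?_, ?_, ?_, ?_, ?_⟩
        · rw [hs]
          simp only [List.sum_cons, ihsum]
          omega
        · -- sorted
          rw [hs]
          rw [List.pairwise_cons, List.pairwise_cons]
          have hallL : ∀ y ∈ sylv (low t), (x - 1) / 2 + (low t).length > y := by
            intro y hy
            have hne : sylv (low t) ≠ [] := List.ne_nil_of_mem hy
            have hLne : low t ≠ [] := by
              intro hL0; rw [hL0] at hne; exact hne (by rw [sylv.eq_1])
            obtain ⟨hhead, _⟩ := ihhead hLne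
            have hh := hLelt (low t).head! (List.head!_mem_self hLne)
            obtain ⟨g, hg⟩ := hh.1
            have hhv : ((low t).head! - 1) / 2 < (x - 1) / 2 := by
              have := hh.2
              omega
            have hy' : y ≤ (sylv (low t)).head! := by
              cases hsL : sylv (low t) with
              | nil => simp [hsL] at hy
              | cons s0 ss =>
                rw [hsL] at hy ihsorted
                rcases List.mem_cons.1 hy with rfl | hy2
                · simp
                · have := (List.pairwise_cons.1 ihsorted).1 y hy2
                  simp; omega
            rw [hhead] at hy'
            omega
          refine ⟨?_, ⟨hallL, ihsorted⟩⟩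
          intro b hb
          rcases List.mem_cons.1 hb with rfl | hb2
          · omega
          · have := hallL b hb2
            omega
        · rw [hs]
          intro y hy
          rcases List.mem_cons.1 hy with rfl | hy2
          · omega
          rcases List.mem_cons.1 hy2 with rfl | hy3
          · omega
          · exact ihpos y hy3
        · -- runs = dcount
          rw [hs]
          cases hsL : sylv (low t) with
          | nil =>
            have hLnil : low t = [] := by
              by_contra hLne
              exact (ihhead hLne).2 hsL
            have hFnil : flt t = [] := by
              rw [hfltmap, hLnil]
              rfl
            have htrep : t = List.replicate (t.count 1) 1 := by
              nth_rewrite 1 [hdecomp]; rw [hFnil]; simp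
            have hct : t.length = t.count 1 := by
              rw [hLnil] at hlent
              simpa using hlent
            have hdxt : dcount (x :: t) = 1 + (if t.count 1 = 0 then 0 else 1) := by
              nth_rewrite 1 [htrep]
              exact dcount_cons_rep_one (by omega) _
            show (if (x - 1) / 2 + (low t).length + 1 < t.length + 1 + (x - 1) / 2
                then 1 else 0) + runs [(x - 1) / 2 + (low t).length] = _
            rw [runs, hdxt, hLnil]
            simp only [List.length_nil, add_zero]
            by_cases hc0 : t.count 1 = 0
            · rw [if_pos hc0, if_neg (by omega)]
            · rw [if_neg hc0, if_pos (by omega)]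
          | cons s0 ss =>
            have hLne : low t ≠ [] := by
              intro hL0; rw [hL0] at hsL; rw [sylv.eq_1] at hsL; exact absurd hsL (by simp)
            obtain ⟨hhead, _⟩ := ihhead hLne
            have hFne : flt t ≠ [] := by
              intro hF
              apply hLne
              show (flt t).map _ = []
              rw [hF]
              rfl
            obtain ⟨th, tt, httt, hth3, hthodd, hflt⟩ := filter_ne_nil_head h.tail hFne
            have hLhead : (low t).head! = th - 2 := by
              show ((flt t).map (· - 2)).head! = th - 2
              rw [hflt]
              simp
            obtain ⟨g, hg⟩ := hthodd
            have hthx : th ≤ x := h.head_ge th (httt ▸ (by simp))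
            have hdx : dcount (x :: t) = (if th < x then 1 else 0) + dcount t := by
              rw [httt]; rfl
            have hdt : dcount t = dcount (low t) + (if t.count 1 = 0 then 0 else 1) := by
              nth_rewrite 1 [hdecomp]
              rw [hfltmap, dcount_append_ones _ _ (by
                intro y hy
                simp only [List.mem_map] at hy
                obtain ⟨z, _, rfl⟩ := hy
                omega)]
              rw [dcount_map_add_two]
            show (if (x - 1) / 2 + (low t).length + 1 < t.length + 1 + (x - 1) / 2
                then 1 else 0) + runs (((x - 1) / 2 + (low t).length) :: s0 :: ss) = _
            rw [runs]
            have hruns2 : runs (s0 :: ss) = dcount (low t) := by rw [← hsL, ihruns]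
            rw [hruns2, hdx, hdt]
            have hs0 : s0 = (low t).length + ((low t).head! - 1) / 2 := by
              have h9 : (sylv (low t)).head! = s0 := by rw [hsL]; rfl
              rw [← h9, hhead]
            rw [hLhead] at hs0
            have e1 : (if (x - 1) / 2 + (low t).length + 1 < t.length + 1 + (x - 1) / 2
                then 1 else 0) = (if t.count 1 = 0 then 0 else 1) := by
              rcases Nat.eq_zero_or_pos (t.count 1) with hc0 | hc0
              · rw [if_neg (by omega), if_pos hc0]
              · rw [if_pos (by omega), if_neg (by omega)]
            have e2 : (if s0 + 1 < (x - 1) / 2 + (low t).length then 1 else 0)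
                = (if th < x then 1 else 0) := by
              by_cases hlt : th < x
              · rw [if_pos (by omega), if_pos hlt]
              · rw [if_neg (by omega), if_neg hlt]
            rw [e1, e2]
            ring
        · -- sylvInv ∘ sylv = id
          rw [hs]
          show sylvInv (_ :: _ :: sylv (low t)) = _
          rw [sylvInv, ihinv]
          have e1 : (x - 1) / 2 + (low t).length - (low t).length = (x - 1) / 2 := by omega
          rw [e1]
          have e2 : 2 * ((x - 1) / 2) + 1 = x := by omega
          have e3 : t.length + 1 + (x - 1) / 2 - (x - 1) / 2 - 1 - (low t).length
              = t.count 1 := by omega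
          rw [e2, e3, ← hfltmap, ← hdecomp]
        · intro _
          rw [hs]
          exact ⟨by simp [List.length_cons], by simp⟩

lemma oddDec_replicate_one (c : ℕ) : OddDec (List.replicate c 1) := by
  constructor
  · apply List.pairwise_iff_forall_sublist.2
    intro a b hs
    have := hs.subset
    simp at this
    omega
  · intro x hx
    rw [List.eq_of_mem_replicate hx]
    exact odd_one

lemma sylv_replicate_one (c : ℕ) (hc : 0 < c) : sylv (List.replicate c 1) = [c] := by
  obtain ⟨c, rfl⟩ := Nat.exists_eq_add_of_lt hc
  rw [Nat.zero_add, List.replicate_succ, sylv.eq_2]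
  simp

lemma sylvInv_nil : sylvInv [] = [] := by rw [sylvInv]

lemma sylvInv_spec : ∀ (N : ℕ) (μ : List ℕ), μ.length ≤ N → μ.Pairwise (· > ·) →
    (∀ x ∈ μ, 0 < x) →
    OddDec (sylvInv μ) ∧ sylv (sylvInv μ) = μ ∧
    (μ ≠ [] → (sylvInv μ).length + ((sylvInv μ).head! - 1) / 2 = μ.head! ∧
      sylvInv μ ≠ [] ∧ Odd (sylvInv μ).head!) := by
  intro N
  induction N with
  | zero =>
    intro μ hl _ _
    have : μ = [] := List.length_eq_zero_iff.1 (Nat.le_zero.1 hl)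
    subst this
    rw [sylvInv_nil]
    exact ⟨⟨List.Pairwise.nil, by simp⟩, by rw [sylv.eq_1], by simp⟩
  | succ N ih =>
    intro μ hl hsort hpos
    match μ, hl with
    | [], _ =>
      rw [sylvInv_nil]
      exact ⟨⟨List.Pairwise.nil, by simp⟩, by rw [sylv.eq_1], by simp⟩
    | [a], _ =>
      have ha : 0 < a := hpos a (by simp)
      have hinv : sylvInv [a] = List.replicate a 1 := by rw [sylvInv]
      refine ⟨hinv ▸ oddDec_replicate_one a, by rw [hinv, sylv_replicate_one a ha], fun _ => ?_⟩
      rw [hinv]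
      obtain ⟨a, rfl⟩ := Nat.exists_eq_add_of_lt ha
      rw [Nat.zero_add, List.replicate_succ]
      refine ⟨by simp, by simp, by simp⟩
    | a :: b :: rest, hl =>
      have hab : b < a := (List.pairwise_cons.1 hsort).1 b (by simp)
      have hsortr : (b :: rest).Pairwise (· > ·) := (List.pairwise_cons.1 hsort).2
      have hsort2 : rest.Pairwise (· > ·) := (List.pairwise_cons.1 hsortr).2
      have hposr : ∀ x ∈ rest, 0 < x := fun x hx => hpos x (by simp [hx])
      have hlr : rest.length ≤ N := by simp at hl; omega
      obtain ⟨ihodd, ihsylv, ihhead⟩ := ih rest hlr hsort2 hposr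
      have hheadb : rest ≠ [] → rest.head! < b := by
        intro hrne
        exact (List.pairwise_cons.1 hsortr).1 rest.head! (List.head!_mem_self hrne)
      have hlb : (sylvInv rest).length < b := by
        cases hrest : rest with
        | nil => rw [sylvInv_nil]; simpa using hpos b (by simp)
        | cons c r2 =>
          have hcb : rest.head! < b := hrest ▸ hheadb (by rw [hrest]; simp)
          obtain ⟨hh, _, _⟩ := ihhead (by rw [hrest]; simp)
          rw [hrest] at hh hcb
          omega
      have hinv : sylvInv (a :: b :: rest) =
          (2 * (b - (sylvInv rest).length) + 1) ::
          ((sylvInv rest).map (· + 2) ++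
            List.replicate (a - (b - (sylvInv rest).length) - 1 - (sylvInv rest).length) 1) := by
        rw [sylvInv]
      have hmapelt : ∀ y ∈ (sylvInv rest).map (· + 2),
          Odd y ∧ 3 ≤ y ∧ y ≤ 2 * (b - (sylvInv rest).length) + 1 := by
        intro y hy
        simp only [List.mem_map] at hy
        obtain ⟨z, hz, rfl⟩ := hy
        obtain ⟨k, hk⟩ := ihodd.2 z hz
        have hzh : z ≤ (sylvInv rest).head! := by
          have hne : sylvInv rest ≠ [] := List.ne_nil_of_mem hz
          cases hsr : sylvInv rest with
          | nil => rw [hsr] at hz; simp at hz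
          | cons s0 ss =>
            rw [hsr] at hz ihodd
            rcases List.mem_cons.1 hz with rfl | hz2
            · simp
            · have := (List.pairwise_cons.1 ihodd.1).1 z hz2
              simp; omega
        have hrne : rest ≠ [] := by
          intro hr
          rw [hr, sylvInv_nil] at hz
          simp at hz
        obtain ⟨hh, hne, hodd⟩ := ihhead hrne
        obtain ⟨w, hw⟩ := hodd
        have hch : rest.head! < b := hheadb hrne
        refine ⟨⟨k + 1, by omega⟩, by omega, by omega⟩
      constructor
      · -- OddDec
        rw [hinv]
        constructor
        · rw [List.pairwise_cons]
          constructor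
          · intro y hy
            rcases List.mem_append.1 hy with hy1 | hy2
            · have := hmapelt y hy1
              omega
            · rw [List.eq_of_mem_replicate hy2]
              omega
          · refine List.pairwise_append.2 ⟨?_, ?_, ?_⟩
            · exact ihodd.1.map _ (fun x y hxy => by omega)
            · apply List.pairwise_iff_forall_sublist.2
              intro u w hs
              have := hs.subset
              simp at this
              omega
            · intro u hu w hw
              rw [List.eq_of_mem_replicate hw]
              have := hmapelt u hu
              omega
        · intro y hy
          rcases List.mem_cons.1 hy with rfl | hy2
          · exact ⟨b - (sylvInv rest).length, by omega⟩
          rcases List.mem_append.1 hy2 with hy3 | hy4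
          · exact (hmapelt y hy3).1
          · rw [List.eq_of_mem_replicate hy4]
            exact odd_one
      constructor
      · -- sylv ∘ sylvInv = id
        rw [hinv, sylv.eq_2, if_neg (by omega)]
        have hflt : flt ((sylvInv rest).map (· + 2) ++
            List.replicate (a - (b - (sylvInv rest).length) - 1 - (sylvInv rest).length) 1)
            = (sylvInv rest).map (· + 2) := by
          show List.filter _ _ = _
          rw [List.filter_append]
          have e1 : List.filter (fun y => decide (3 ≤ y)) ((sylvInv rest).map (· + 2))
              = (sylvInv rest).map (· + 2) := by
            rw [List.filter_eq_self]
            intro y hy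
            have := (hmapelt y hy).2.1
            simpa using this
          have e2 : List.filter (fun y => decide (3 ≤ y))
              (List.replicate (a - (b - (sylvInv rest).length) - 1 - (sylvInv rest).length) 1)
              = [] := by
            rw [List.filter_eq_nil_iff]
            intro y hy
            rw [List.eq_of_mem_replicate hy]
            simp
          rw [e1, e2, List.append_nil]
        have hlow : List.map (· - 2) (List.filter (fun y => 3 ≤ y)
            ((sylvInv rest).map (· + 2) ++
            List.replicate (a - (b - (sylvInv rest).length) - 1 - (sylvInv rest).length) 1))
            = sylvInv rest := by
          show (flt _).map _ = _
          rw [hflt, List.map_map]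
          calc List.map ((fun x => x - 2) ∘ fun x => x + 2) (sylvInv rest)
              = List.map id (sylvInv rest) := List.map_congr_left (fun x hx => by simp)
            _ = sylvInv rest := List.map_id _
        rw [hlow, ihsylv, List.length_append, List.length_map, List.length_replicate]
        simp only [List.cons.injEq]
        exact ⟨by omega, by omega, trivial⟩
      · intro _
        rw [hinv]
        refine ⟨?_, by simp, ⟨b - (sylvInv rest).length, by simp⟩⟩
        simp only [List.head!, List.length_cons, List.length_append, List.length_map,
          List.length_replicate]
        omega

lemma sylv_all {l : List ℕ} (h : OddDec l) :
    (sylv l).sum = l.sum ∧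
    (sylv l).Pairwise (· > ·) ∧ (∀ x ∈ sylv l, 0 < x) ∧
    runs (sylv l) = dcount l ∧
    sylvInv (sylv l) = l := by
  obtain ⟨h1, h2, h3, h4, h5, _⟩ := sylv_spec l.length l le_rfl h
  exact ⟨h1, h2, h3, h4, h5⟩

lemma sylvInv_all {μ : List ℕ} (h1 : μ.Pairwise (· > ·)) (h2 : ∀ x ∈ μ, 0 < x) :
    OddDec (sylvInv μ) ∧ sylv (sylvInv μ) = μ :=
  ⟨(sylvInv_spec μ.length μ le_rfl h1 h2).1, (sylvInv_spec μ.length μ le_rfl h1 h2).2.1⟩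

lemma plist_coe {n : ℕ} (p : n.Partition) : (↑(plist p) : Multiset ℕ) = p.parts := by
  rw [plist, Multiset.coe_reverse, Multiset.sort_eq]

lemma plist_sorted {n : ℕ} (p : n.Partition) : (plist p).Pairwise (· ≥ ·) := by
  have h := Multiset.pairwise_sort p.parts (· ≤ ·)
  exact List.pairwise_reverse.2 (by exact h)

lemma plist_pos {n : ℕ} (p : n.Partition) : ∀ x ∈ plist p, 0 < x := by
  intro x hx
  apply p.parts_pos
  rw [← plist_coe p]
  exact_mod_cast hx

lemma plist_sum {n : ℕ} (p : n.Partition) : (plist p).sum = n := by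
  have := p.parts_sum
  rw [← plist_coe p, Multiset.sum_coe] at this
  exact this

def ofL {n : ℕ} (l : List ℕ) (hpos : ∀ i ∈ l, 0 < i) (hsum : l.sum = n) : n.Partition :=
  ⟨↑l, fun hi => hpos _ (by exact_mod_cast hi), by rw [Multiset.sum_coe, hsum]⟩

lemma ofL_parts {n : ℕ} (l : List ℕ) (hpos) (hsum) :
    (ofL (n := n) l hpos hsum).parts = ↑l := rfl

lemma plist_ofL {n : ℕ} (l : List ℕ) (hpos) (hsum) (hsort : l.Pairwise (· ≥ ·)) :
    plist (ofL (n := n) l hpos hsum) = l := by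
  rw [plist, ofL_parts]
  have hperm : List.Perm (Multiset.sort (↑l : Multiset ℕ) (· ≤ ·)) l.reverse := by
    rw [← Multiset.coe_eq_coe, Multiset.sort_eq, Multiset.coe_reverse]
  have hsorted2 : l.reverse.Pairwise (· ≤ ·) := List.pairwise_reverse.2 (by exact hsort)
  rw [List.Perm.eq_of_pairwise' (Multiset.pairwise_sort _ _) hsorted2 hperm, List.reverse_reverse]

lemma dedup_dcount : ∀ (l : List ℕ), l.Pairwise (· ≥ ·) → l.dedup.length = dcount l
  | [], _ => rfl
  | [a], _ => by simp [dcount]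
  | a :: b :: t, h => by
    have ht : (b :: t).Pairwise (· ≥ ·) := (List.pairwise_cons.1 h).2
    have ih := dedup_dcount (b :: t) ht
    have hab : b ≤ a := (List.pairwise_cons.1 h).1 b (by simp)
    rw [dcount]
    by_cases hlt : b < a
    · have hnotmem : a ∉ b :: t := by
        intro hmem
        rcases List.mem_cons.1 hmem with rfl | hmem2
        · omega
        · have := (List.pairwise_cons.1 ht).1 a hmem2
          omega
      rw [List.dedup_cons_of_notMem hnotmem]
      simp only [List.length_cons, ih, if_pos hlt]
      omega
    · have hba : a = b := by omega
      rw [List.dedup_cons_of_mem (by rw [hba]; exact List.mem_cons_self)]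
      simp [ih, hlt]

lemma toFinset_card_eq_dcount {n : ℕ} (p : n.Partition) :
    p.parts.toFinset.card = dcount (plist p) := by
  rw [← plist_coe p, Multiset.card_toFinset, Multiset.coe_dedup, Multiset.coe_card]
  exact dedup_dcount _ (plist_sorted p)

lemma nodup_iff_strict {l : List ℕ} (hs : l.Pairwise (· ≥ ·)) :
    l.Nodup ↔ l.Pairwise (· > ·) := by
  constructor
  · intro hnd
    exact (hs.and hnd).imp (fun h => lt_of_le_of_ne h.1 (Ne.symm h.2))
  · intro h
    exact h.imp (fun h => ne_of_gt h)

lemma oddDec_plist {n : ℕ} {p : n.Partition} (h : ∀ k ∈ p.parts, Odd k) : OddDec (plist p) :=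
  ⟨plist_sorted p, fun x hx => h x (by rw [← plist_coe p]; exact_mod_cast hx)⟩

lemma strict_plist {n : ℕ} {p : n.Partition} (h : p.parts.Nodup) :
    (plist p).Pairwise (· > ·) := by
  apply (nodup_iff_strict (plist_sorted p)).1
  rw [← Multiset.coe_nodup, plist_coe]
  exact h

def fwdP {n : ℕ} (p : n.Partition) (h : ∀ k ∈ p.parts, Odd k) : n.Partition :=
  ofL (sylv (plist p)) (sylv_all (oddDec_plist h)).2.2.1
    (by rw [(sylv_all (oddDec_plist h)).1, plist_sum])

def bwdP {n : ℕ} (p : n.Partition) (h : p.parts.Nodup) : n.Partition :=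
  ofL (sylvInv (plist p))
    (fun i hi => ((sylvInv_all (strict_plist h) (plist_pos p)).1.2 i hi).pos)
    (by
      have hall := sylvInv_all (strict_plist h) (plist_pos p)
      have := (sylv_all hall.1).1
      rw [hall.2] at this
      rw [← this, plist_sum])

lemma plist_fwdP {n : ℕ} (p : n.Partition) (h : ∀ k ∈ p.parts, Odd k) :
    plist (fwdP p h) = sylv (plist p) :=
  plist_ofL _ _ _ ((sylv_all (oddDec_plist h)).2.1.imp (fun hx => le_of_lt hx))

lemma plist_bwdP {n : ℕ} (p : n.Partition) (h : p.parts.Nodup) :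
    plist (bwdP p h) = sylvInv (plist p) :=
  plist_ofL _ _ _ ((sylvInv_all (strict_plist h) (plist_pos p)).1.1)

lemma fwdP_spec {n m : ℕ} (p : n.Partition) (h : ∀ k ∈ p.parts, Odd k)
    (hm : p.parts.toFinset.card = m) :
    (fwdP p h).parts.Nodup ∧ runs (plist (fwdP p h)) = m := by
  constructor
  · show (↑(sylv (plist p)) : Multiset ℕ).Nodup
    rw [Multiset.coe_nodup]
    exact (nodup_iff_strict ((sylv_all (oddDec_plist h)).2.1.imp (fun hx => le_of_lt hx))).2
      (sylv_all (oddDec_plist h)).2.1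
  · rw [plist_fwdP, (sylv_all (oddDec_plist h)).2.2.2.1, ← toFinset_card_eq_dcount, hm]

lemma bwdP_spec {n m : ℕ} (p : n.Partition) (h : p.parts.Nodup)
    (hm : runs (plist p) = m) :
    (∀ k ∈ (bwdP p h).parts, Odd k) ∧ (bwdP p h).parts.toFinset.card = m := by
  have hall := sylvInv_all (strict_plist h) (plist_pos p)
  constructor
  · intro k hk
    apply hall.1.2
    have : (bwdP p h).parts = ↑(sylvInv (plist p)) := rfl
    rw [this] at hk
    exact_mod_cast hk
  · rw [toFinset_card_eq_dcount, plist_bwdP, ← (sylv_all hall.1).2.2.2.1, hall.2, hm]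

lemma bwdP_fwdP {n : ℕ} (p : n.Partition) (h : ∀ k ∈ p.parts, Odd k) (h2) :
    bwdP (fwdP p h) h2 = p := by
  apply Nat.Partition.ext
  show (↑(sylvInv (plist (fwdP p h))) : Multiset ℕ) = p.parts
  rw [plist_fwdP, (sylv_all (oddDec_plist h)).2.2.2.2, plist_coe]

lemma fwdP_bwdP {n : ℕ} (p : n.Partition) (h : p.parts.Nodup) (h2) :
    fwdP (bwdP p h) h2 = p := by
  apply Nat.Partition.ext
  show (↑(sylv (plist (bwdP p h))) : Multiset ℕ) = p.parts
  rw [plist_bwdP, (sylvInv_all (strict_plist h) (plist_pos p)).2, plist_coe]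

theorem sylvester_refinement (n m : ℕ) (hn : 0 < n) (hm : 1 ≤ m) :
    Nat.card {p : n.Partition // (∀ k ∈ p.parts, Odd k) ∧ p.parts.toFinset.card = m} =
    Nat.card {p : n.Partition // p.parts.Nodup ∧ runs (plist p) = m} := by
  apply Nat.card_congr
  exact
    { toFun := fun pp => ⟨fwdP pp.1 pp.2.1,
        (fwdP_spec pp.1 pp.2.1 pp.2.2).1, (fwdP_spec pp.1 pp.2.1 pp.2.2).2⟩
      invFun := fun qq => ⟨bwdP qq.1 qq.2.1,
        (bwdP_spec qq.1 qq.2.1 qq.2.2).1, (bwdP_spec qq.1 qq.2.1 qq.2.2).2⟩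
      left_inv := fun pp =>
        Subtype.ext (bwdP_fwdP pp.1 pp.2.1 (fwdP_spec pp.1 pp.2.1 pp.2.2).1)
      right_inv := fun qq =>
        Subtype.ext (fwdP_bwdP qq.1 qq.2.1 (bwdP_spec qq.1 qq.2.1 qq.2.2).1) }
end

section
/- Fix integers r ≥ 2 and 1 ≤ j ≤ r−1. For every n and every m ≥ 1, the number of partitions of n with all parts ≡ j (mod r) having exactly m distinct part sizes equals the number of partitions of n with multiplicity pattern j, r−j, j, r−j, ... (over strictly decreasing part sizes) that consist of exactly m maximal runs of consecutive integers. -/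
namespace Bess

/-! ### basic counting functions -/

def maxL (l : List ℕ) : ℕ := l.foldr max 0

def cntGT (l : List ℕ) (k : ℕ) : ℕ := l.countP fun q => decide (k < q)

def cntGE (l : List ℕ) (i : ℕ) : ℕ := l.countP fun q => decide (i ≤ q)

lemma le_maxL {l : List ℕ} {q : ℕ} (h : q ∈ l) : q ≤ maxL l := by
  induction l with
  | nil => simp at h
  | cons a t ih =>
    rcases List.mem_cons.1 h with rfl | h'
    · exact le_max_left _ _
    · exact le_trans (ih h') (le_max_right _ _)

lemma maxL_le {l : List ℕ} {b : ℕ} (h : ∀ q ∈ l, q ≤ b) : maxL l ≤ b := by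
  induction l with
  | nil => simp [maxL]
  | cons a t ih =>
    simp only [maxL, List.foldr_cons, max_le_iff]
    exact ⟨h a (by simp), ih fun q hq => h q (by simp [hq])⟩

lemma maxL_mem {l : List ℕ} (h : l ≠ []) : maxL l ∈ l := by
  induction l with
  | nil => simp at h
  | cons a t ih =>
    rcases eq_or_ne t [] with rfl | ht
    · simp [maxL]
    · rcases le_total (maxL t) a with hle | hle
      · have : maxL (a :: t) = a := by
          simp only [maxL, List.foldr_cons]; exact max_eq_left hle
        rw [this]; exact List.mem_cons_self
      · have : maxL (a :: t) = maxL t := by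
          simp only [maxL, List.foldr_cons]; exact max_eq_right hle
        rw [this]; exact List.mem_cons_of_mem _ (ih ht)

lemma cntGT_le_length (l : List ℕ) (k : ℕ) : cntGT l k ≤ l.length :=
  List.countP_le_length

lemma cntGT_antitone {l : List ℕ} {k k' : ℕ} (h : k ≤ k') : cntGT l k' ≤ cntGT l k :=
  List.countP_mono_left fun x _ hx => by
    simp only [decide_eq_true_eq] at hx ⊢; omega

lemma cntGT_pos {l : List ℕ} {q k : ℕ} (hq : q ∈ l) (hk : k < q) : 1 ≤ cntGT l k := by
  rw [Nat.succ_le, cntGT, List.countP_pos_iff]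
  exact ⟨q, hq, by simpa using hk⟩

lemma cntGE_le_length (l : List ℕ) (i : ℕ) : cntGE l i ≤ l.length :=
  List.countP_le_length

lemma cntGE_antitone {l : List ℕ} {i i' : ℕ} (h : i ≤ i') : cntGE l i' ≤ cntGE l i :=
  List.countP_mono_left fun x _ hx => by
    simp only [decide_eq_true_eq] at hx ⊢; omega

lemma cntGE_zero (l : List ℕ) : cntGE l 0 = l.length := by
  rw [cntGE, List.countP_eq_length]; intro a _; simp

/-! ### the key sorted-count lemma -/

lemma sorted_getElem_le {l : List ℕ} (hs : l.Pairwise (· ≥ ·)) {a b : ℕ}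
    (hab : a ≤ b) (hb : b < l.length) : l[b] ≤ l[a] := by
  rcases eq_or_lt_of_le hab with rfl | h
  · exact le_refl _
  · exact List.pairwise_iff_getElem.1 hs a b (lt_of_le_of_lt hab hb) hb h

lemma countP_iff_getElem {l : List ℕ} (hs : l.Pairwise (· ≥ ·)) {i : ℕ} (hi : i < l.length)
    (P : ℕ → Bool) (hP : ∀ a b : ℕ, a ≤ b → P a → P b) :
    i + 1 ≤ l.countP P ↔ P l[i] := by
  constructor
  · intro h
    by_contra hnot
    have hsplit : l.countP P = (l.take i).countP P + (l.drop i).countP P := by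
      rw [← List.countP_append, List.take_append_drop]
    have hdrop : (l.drop i).countP P = 0 := by
      rw [List.countP_eq_zero]
      intro q hq
      rw [List.mem_iff_getElem] at hq
      obtain ⟨b, hb, rfl⟩ := hq
      rw [List.getElem_drop]
      intro hPq
      exact hnot (hP _ _ (sorted_getElem_le hs (Nat.le_add_right i b) (by
        have := hb; rw [List.length_drop] at this; omega)) hPq)
    have htake : (l.take i).countP P ≤ i :=
      le_trans (List.countP_le_length) (by simp)
    omega
  · intro h
    have htake : (l.take (i+1)).countP P = i + 1 := by
      rw [List.countP_eq_length.2, List.length_take]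
      · omega
      · intro q hq
        rw [List.mem_iff_getElem] at hq
        obtain ⟨b, hb, rfl⟩ := hq
        rw [List.getElem_take]
        have hb' : b < l.length := by
          have := hb; rw [List.length_take] at this; omega
        have hbi : b ≤ i := by have := hb; rw [List.length_take] at this; omega
        exact hP _ _ (sorted_getElem_le hs hbi hi) h
    calc i + 1 = (l.take (i+1)).countP P := htake.symm
      _ ≤ (l.take (i+1)).countP P + (l.drop (i+1)).countP P := Nat.le_add_right _ _
      _ = l.countP P := by rw [← List.countP_append, List.take_append_drop]

lemma cntGT_iff {l : List ℕ} (hs : l.Pairwise (· ≥ ·)) {i : ℕ} (hi : i < l.length) (k : ℕ) :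
    i + 1 ≤ cntGT l k ↔ k < l[i] := by
  rw [cntGT, countP_iff_getElem hs hi _ (fun a b hab ha => by
    simp only [decide_eq_true_eq] at ha ⊢; omega)]
  simp

lemma cntGE_iff {l : List ℕ} (hs : l.Pairwise (· ≥ ·)) {k : ℕ} (hk : k < l.length) (i : ℕ) :
    k + 1 ≤ cntGE l i ↔ i ≤ l[k] := by
  rw [cntGE, countP_iff_getElem hs hk _ (fun a b hab ha => by
    simp only [decide_eq_true_eq] at ha ⊢; omega)]
  simp

/-! ### counts over ranges -/

lemma countP_range_lt (B v : ℕ) :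
    (List.range B).countP (fun k => decide (k < v)) = min v B := by
  induction B with
  | zero => simp
  | succ B ih =>
    rw [List.range_succ, List.countP_append, ih]
    simp only [List.countP_cons, List.countP_nil]
    by_cases h : B < v <;> simp [h] <;> omega

lemma countP_range_le (B v : ℕ) :
    (List.range B).countP (fun k => decide (k ≤ v)) = min (v + 1) B := by
  induction B with
  | zero => simp
  | succ B ih =>
    rw [List.range_succ, List.countP_append, ih]
    simp only [List.countP_cons, List.countP_nil]
    by_cases h : B ≤ v <;> simp [h] <;> omega

end Bess
namespace Bess

/-! ### conjugation -/

def conjL (l : List ℕ) : List ℕ := (List.range (maxL l)).map fun k => cntGT l k - 1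

def unconjL (N : ℕ) (l : List ℕ) : List ℕ := (List.range N).map fun i => cntGE l i

@[simp] lemma conjL_nil : conjL [] = [] := by simp [conjL, maxL]

@[simp] lemma conjL_length (l : List ℕ) : (conjL l).length = maxL l := by
  simp [conjL]

lemma conjL_getElem (l : List ℕ) {k : ℕ} (hk : k < (conjL l).length) :
    (conjL l)[k] = cntGT l k - 1 := by
  simp [conjL]

@[simp] lemma unconjL_length (N : ℕ) (l : List ℕ) : (unconjL N l).length = N := by
  simp [unconjL]

lemma unconjL_getElem (N : ℕ) (l : List ℕ) {i : ℕ} (hi : i < (unconjL N l).length) :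
    (unconjL N l)[i] = cntGE l i := by
  simp [unconjL]

lemma conjL_sorted (l : List ℕ) : (conjL l).Pairwise (· ≥ ·) := by
  rw [List.pairwise_iff_getElem]
  intro a b ha hb hab
  rw [conjL_getElem l ha, conjL_getElem l hb]
  have := cntGT_antitone (l := l) (le_of_lt (by
    have h1 := ha; have h2 := hb
    rw [conjL_length] at h1 h2
    exact hab))
  omega

lemma unconjL_sorted (N : ℕ) (l : List ℕ) : (unconjL N l).Pairwise (· ≥ ·) := by
  rw [List.pairwise_iff_getElem]
  intro a b ha hb hab
  rw [unconjL_getElem N l ha, unconjL_getElem N l hb]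
  exact cntGE_antitone (le_of_lt hab)

lemma cntGT_pos_of_lt_maxL {l : List ℕ} {k : ℕ} (hk : k < maxL l) : 1 ≤ cntGT l k := by
  have hne : l ≠ [] := by
    intro h; rw [h] at hk; simp [maxL] at hk
  exact cntGT_pos (maxL_mem hne) hk

/-- first roundtrip: `unconjL (length l) (conjL l) = l` for sorted `l`. -/
lemma unconjL_conjL {l : List ℕ} (hs : l.Pairwise (· ≥ ·)) :
    unconjL l.length (conjL l) = l := by
  apply List.ext_getElem (by simp)
  intro i h1 h2
  rw [unconjL_getElem _ _ h1]
  have hil : i < l.length := h2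
  rw [cntGE, conjL, List.countP_map]
  rw [List.countP_congr (q := fun k => decide (k < l[i])) (fun k hk => by
    rw [List.mem_range] at hk
    have h1 := cntGT_pos_of_lt_maxL hk
    have h2 := cntGT_iff hs hil k
    simp only [Function.comp_apply, decide_eq_true_eq]
    omega), countP_range_lt]
  have : l[i] ≤ maxL l := le_maxL (l.getElem_mem hil)
  omega

/-- second roundtrip: `conjL (unconjL N l) = l` for sorted `l` with entries `< N`. -/
lemma conjL_unconjL {N : ℕ} {l : List ℕ} (hs : l.Pairwise (· ≥ ·))
    (hN : ∀ q ∈ l, q < N) : conjL (unconjL N l) = l := by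
  have hmax : maxL (unconjL N l) = l.length := by
    rcases Nat.eq_zero_or_pos N with rfl | hNpos
    · have : l = [] := by
        cases l with
        | nil => rfl
        | cons a t => exact absurd (hN a (by simp)) (by omega)
      subst this; simp [unconjL, maxL]
    · apply le_antisymm
      · apply maxL_le
        intro q hq
        rw [unconjL] at hq
        simp only [List.mem_map, List.mem_range] at hq
        obtain ⟨i, _, rfl⟩ := hq
        exact cntGE_le_length l i
      · have h0 : cntGE l 0 ∈ unconjL N l := by
          rw [unconjL]
          exact List.mem_map.2 ⟨0, List.mem_range.2 hNpos, rfl⟩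
        have := le_maxL h0
        rw [cntGE_zero] at this
        exact this
  apply List.ext_getElem (by simp [hmax])
  intro k h1 h2
  rw [conjL_getElem _ h1]
  have hkl : k < l.length := h2
  rw [cntGT, unconjL, List.countP_map]
  rw [List.countP_congr (q := fun i => decide (i ≤ l[k])) (fun i hi => by
    have h2' := cntGE_iff hs hkl i
    simp only [Function.comp_apply, decide_eq_true_eq]
    omega), countP_range_le]
  have : l[k] < N := hN _ (l.getElem_mem hkl)
  omega

end Bess
namespace Bess

/-! ### sums -/

lemma sum_map_range_cntGT (l : List ℕ) {B : ℕ} (h : ∀ q ∈ l, q ≤ B) :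
    ((List.range B).map (cntGT l)).sum = l.sum := by
  induction l with
  | nil =>
    have : cntGT [] = fun _ => 0 := by
      funext k; simp [cntGT]
    rw [this]
    simp
  | cons a t ih =>
    have ht : ∀ q ∈ t, q ≤ B := fun q hq => h q (by simp [hq])
    have hsum : ∀ (L : List ℕ), (L.map (cntGT (a :: t))).sum
        = (L.map (cntGT t)).sum + (L.map (fun k => if k < a then 1 else 0)).sum := by
      intro L
      induction L with
      | nil => simp
      | cons x L ihL =>
        simp only [List.map_cons, List.sum_cons, ihL, cntGT, List.countP_cons]
        by_cases hxa : x < a <;> simp [hxa] <;> ring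
    rw [hsum, ih ht]
    have hind : ((List.range B).map (fun k => if k < a then 1 else 0)).sum = a := by
      have : ∀ (C : ℕ), ((List.range C).map (fun k => if k < a then 1 else 0)).sum
          = min a C := by
        intro C
        induction C with
        | zero => simp
        | succ C ihC =>
          rw [List.range_succ, List.map_append, List.sum_append, ihC]
          by_cases hCa : C < a <;> simp [hCa] <;> omega
      rw [this B]
      have := h a (by simp)
      omega
    rw [hind]
    simp [List.sum_cons]; ring

lemma conjL_sum_add_maxL (l : List ℕ) : (conjL l).sum + maxL l = l.sum := by
  have h1 : ((List.range (maxL l)).map (cntGT l)).sum = l.sum :=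
    sum_map_range_cntGT l (fun q hq => le_maxL hq)
  rw [conjL]
  have : ∀ (L : List ℕ), (∀ k ∈ L, 1 ≤ cntGT l k) →
      (L.map (fun k => cntGT l k - 1)).sum + L.length = (L.map (cntGT l)).sum := by
    intro L
    induction L with
    | nil => simp
    | cons x L ihL =>
      intro hL
      have hx := hL x (by simp)
      have := ihL (fun k hk => hL k (by simp [hk]))
      simp only [List.map_cons, List.sum_cons, List.length_cons]
      omega
  rw [← h1, ← this (List.range (maxL l)) (fun k hk => cntGT_pos_of_lt_maxL (List.mem_range.1 hk))]
  simp

lemma conjL_measure {l : List ℕ} (h : l ≠ []) :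
    (conjL l).sum + (conjL l).length < l.sum + l.length := by
  rw [conjL_length]
  rw [← conjL_sum_add_maxL l] at *
  have : 1 ≤ l.length := by
    cases l with
    | nil => exact absurd rfl h
    | cons a t => simp
  omega

/-! ### the bijection -/

def fL : List ℕ → List ℕ
  | [] => []
  | q :: t => (maxL (q :: t) + (q :: t).length) :: fL (conjL (q :: t))
termination_by l => l.sum + l.length
decreasing_by
  exact conjL_measure (by simp)

def gL : List ℕ → List ℕ
  | [] => []
  | e :: E => unconjL (e - (gL E).length) (gL E)

@[simp] lemma fL_nil : fL [] = [] := by rw [fL]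

@[simp] lemma gL_nil : gL [] = [] := by rw [gL]

lemma fL_cons {l : List ℕ} (h : l ≠ []) :
    fL l = (maxL l + l.length) :: fL (conjL l) := by
  cases l with
  | nil => exact absurd rfl h
  | cons q t => rw [fL]

lemma fL_eq_nil_iff {l : List ℕ} : fL l = [] ↔ l = [] := by
  cases l with
  | nil => simp
  | cons q t => rw [fL]; simp

lemma gL_sorted (E : List ℕ) : (gL E).Pairwise (· ≥ ·) := by
  cases E with
  | nil => simp [gL]
  | cons e E => rw [gL]; exact unconjL_sorted _ _

/-- roundtrip 1 -/
lemma gL_fL {l : List ℕ} (hs : l.Pairwise (· ≥ ·)) : gL (fL l) = l := by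
  generalize hfuel : l.sum + l.length = fuel
  induction fuel using Nat.strong_induction_on generalizing l with
  | _ fuel ih =>
    subst hfuel
    rcases eq_or_ne l [] with rfl | hne
    · simp
    · rw [fL_cons hne, gL]
      rw [ih _ (conjL_measure hne) (conjL_sorted l) rfl]
      rw [conjL_length]
      have : maxL l + l.length - maxL l = l.length := by omega
      rw [this]
      exact unconjL_conjL hs

/-- roundtrip 2 -/
lemma fL_gL {E : List ℕ} (hs : E.Pairwise (· > ·)) (hpos : ∀ e ∈ E, 0 < e) :
    fL (gL E) = E := by
  induction E with
  | nil => simp [gL]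
  | cons e E ihE =>
    have hsE : E.Pairwise (· > ·) := hs.of_cons
    have hE : fL (gL E) = E := ihE hsE (fun x hx => hpos x (by simp [hx]))
    rw [gL]
    set l' := gL E with hl'
    have hl's : l'.Pairwise (· ≥ ·) := gL_sorted E
    -- key bounds
    have hbound : ∀ q ∈ l', q + l'.length < e := by
      intro q hq
      cases E with
      | nil =>
        have : l' = [] := by rw [hl', gL]
        rw [this] at hq; simp at hq
      | cons e2 E2 =>
        have hl'ne : l' ≠ [] := by
          intro hnil
          rw [hnil] at hE
          simp at hE
        have he2 : e2 = maxL l' + l'.length := by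
          rw [fL_cons hl'ne] at hE
          exact (List.cons.injEq _ _ _ _ ▸ hE).1.symm
        have he2e : e2 < e := by
          have := hs
          rw [List.pairwise_cons] at this
          exact this.1 e2 (by simp)
        have hql' : q ≤ maxL l' := le_maxL hq
        omega
    have hN : l'.length < e := by
      cases E with
      | nil =>
        have : l' = [] := by rw [hl', gL]
        rw [this]
        simp only [List.length_nil]
        exact hpos e (by simp)
      | cons e2 E2 =>
        have hl'ne : l' ≠ [] := by
          intro hnil
          rw [hnil] at hE
          simp at hE
        obtain ⟨q, hq⟩ := List.exists_mem_of_ne_nil l' hl'ne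
        have := hbound q hq
        omega
    set N := e - l'.length with hNdef
    have hNpos : 0 < N := by omega
    have hunne : unconjL N l' ≠ [] := by
      simp only [ne_eq, unconjL]
      intro hcon
      have := congrArg List.length hcon
      simp at this
      omega
    rw [fL_cons hunne]
    have hmax : maxL (unconjL N l') = l'.length := by
      apply le_antisymm
      · apply maxL_le
        intro q hq
        rw [unconjL] at hq
        simp only [List.mem_map, List.mem_range] at hq
        obtain ⟨i, _, rfl⟩ := hq
        exact cntGE_le_length l' i
      · have h0 : cntGE l' 0 ∈ unconjL N l' := by
          rw [unconjL]
          exact List.mem_map.2 ⟨0, List.mem_range.2 hNpos, rfl⟩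
        have := le_maxL h0
        rw [cntGE_zero] at this
        exact this
    have hlen : (unconjL N l').length = N := unconjL_length _ _
    rw [hmax, hlen]
    have hhead : l'.length + N = e := by omega
    rw [hhead]
    rw [conjL_unconjL hl's (fun q hq => by have := hbound q hq; omega)]
    rw [hE]

end Bess
namespace Bess

/-! ### properties of `fL`: sortedness and positivity -/

lemma maxL_conjL {l : List ℕ} (h : 0 < maxL l) :
    maxL (conjL l) = cntGT l 0 - 1 := by
  apply le_antisymm
  · apply maxL_le
    intro q hq
    rw [conjL] at hq
    simp only [List.mem_map, List.mem_range] at hq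
    obtain ⟨k, _, rfl⟩ := hq
    have := cntGT_antitone (l := l) (Nat.zero_le k)
    omega
  · apply le_maxL
    rw [conjL]
    exact List.mem_map.2 ⟨0, List.mem_range.2 h, rfl⟩

lemma conjL_ne_nil {l : List ℕ} (h : 0 < maxL l) : conjL l ≠ [] := by
  intro hcon
  have := congrArg List.length hcon
  rw [conjL_length] at this
  simp at this
  omega

lemma fL_sorted (l : List ℕ) : (fL l).Pairwise (· > ·) := by
  generalize hfuel : l.sum + l.length = fuel
  induction fuel using Nat.strong_induction_on generalizing l with
  | _ fuel ih =>
    subst hfuel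
    rcases eq_or_ne l [] with rfl | hne
    · simp
    · rw [fL_cons hne]
      have htail : (fL (conjL l)).Pairwise (· > ·) :=
        ih _ (conjL_measure hne) (l := conjL l) rfl
      rw [List.pairwise_cons]
      refine ⟨?_, htail⟩
      intro b hb
      rcases eq_or_ne (conjL l) [] with hcn | hcn
      · rw [hcn] at hb; simp at hb
      · rw [fL_cons hcn] at hb htail
        have hmaxpos : 0 < maxL l := by
          by_contra hc
          exact hcn (by
            have : maxL l = 0 := by omega
            rw [conjL, this]; simp)
        have hhead : maxL (conjL l) + (conjL l).length = cntGT l 0 - 1 + maxL l := by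
          rw [maxL_conjL hmaxpos, conjL_length]
        have hlenpos : 1 ≤ l.length := by
          cases l with
          | nil => exact absurd rfl hne
          | cons a t => simp
        have hcnt : cntGT l 0 ≤ l.length := cntGT_le_length l 0
        rcases List.mem_cons.1 hb with rfl | hbtail
        · omega
        · have := (List.pairwise_cons.1 htail).1 b hbtail
          omega

lemma fL_pos (l : List ℕ) : ∀ e ∈ fL l, 0 < e := by
  generalize hfuel : l.sum + l.length = fuel
  induction fuel using Nat.strong_induction_on generalizing l with
  | _ fuel ih =>
    subst hfuel
    rcases eq_or_ne l [] with rfl | hne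
    · simp
    · rw [fL_cons hne]
      intro e he
      rcases List.mem_cons.1 he with rfl | htail
      · have : 1 ≤ l.length := by
          cases l with
          | nil => exact absurd rfl hne
          | cons a t => simp
        omega
      · exact ih _ (conjL_measure hne) (l := conjL l) rfl e htail

/-! ### weights -/

/-- alternating-pattern weight of a distinct-parts list -/
def wsum (r : ℕ) : ℕ → List ℕ → ℕ
  | _, [] => 0
  | j, e :: E => j * e + wsum r (r - j) E

lemma wsum_fL {r : ℕ} (l : List ℕ) : ∀ j, j ≤ r →
    wsum r j (fL l) = r * l.sum + j * l.length := by
  generalize hfuel : l.sum + l.length = fuel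
  induction fuel using Nat.strong_induction_on generalizing l with
  | _ fuel ih =>
    subst hfuel
    intro j hj
    rcases eq_or_ne l [] with rfl | hne
    · simp [wsum]
    · rw [fL_cons hne, wsum]
      rw [ih _ (conjL_measure hne) (l := conjL l) rfl (r - j) (by omega)]
      rw [conjL_length]
      have hsum : (conjL l).sum + maxL l = l.sum := conjL_sum_add_maxL l
      have h1 : r * l.sum = r * (conjL l).sum + r * maxL l := by
        rw [← hsum]; ring
      have h2 : j * maxL l ≤ r * maxL l := Nat.mul_le_mul_right _ hj
      have h3 : (r - j) * maxL l = r * maxL l - j * maxL l := Nat.sub_mul r j _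
      rw [h3, h1, Nat.mul_add]
      zify [h2]
      ring

end Bess
namespace Bess

/-! ### distinct counts under conjugation -/

lemma countP_add_le (p q r : ℕ → Bool) (l : List ℕ)
    (hq : ∀ a, q a = true → p a = true) (hr : ∀ a, r a = true → p a = true)
    (hd : ∀ a, ¬(q a = true ∧ r a = true)) :
    l.countP q + l.countP r ≤ l.countP p := by
  induction l with
  | nil => simp
  | cons x t ih =>
    simp only [List.countP_cons]
    have h1 := hq x
    have h2 := hr x
    have h3 := hd x
    by_cases hqx : q x = true <;> by_cases hrx : r x = true <;>
      by_cases hpx : p x = true <;> simp_all <;> omega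

lemma cntGT_strict {l : List ℕ} {v v' : ℕ} (hv : v ∈ l) (hvpos : 0 < v)
    (hv' : v' ∈ l) (hlt : v < v') :
    cntGT l (v' - 1) < cntGT l (v - 1) := by
  have key := countP_add_le (fun q => decide (v - 1 < q)) (fun q => decide (v' - 1 < q))
    (fun q => decide (q = v)) l
    (fun a ha => by simp only [decide_eq_true_eq] at ha ⊢; omega)
    (fun a ha => by simp only [decide_eq_true_eq] at ha ⊢; omega)
    (fun a => by simp only [decide_eq_true_eq]; omega)
  have hcv : 1 ≤ l.countP (fun q => decide (q = v)) := by
    rw [Nat.succ_le, List.countP_pos_iff]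
    exact ⟨v, hv, by simp⟩
  have h1 : 1 ≤ cntGT l (v' - 1) := cntGT_pos hv' (by omega)
  rw [cntGT, cntGT]
  rw [cntGT] at h1
  omega

lemma dcount_conjL (l : List ℕ) :
    (conjL l).toFinset.card + (if (0:ℕ) ∈ l then 1 else 0) = l.toFinset.card := by
  rcases eq_or_ne l [] with rfl | hne
  · simp
  by_cases hmax : maxL l = 0
  · have hall : ∀ q ∈ l, q = 0 := fun q hq => by
      have := le_maxL hq; omega
    obtain ⟨q, hq⟩ := List.exists_mem_of_ne_nil l hne
    have h0 : (0:ℕ) ∈ l := by rw [← hall q hq]; exact hq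
    have hc : conjL l = [] := by rw [conjL, hmax]; simp
    have hfin : l.toFinset = {0} := by
      ext v
      simp only [List.mem_toFinset, Finset.mem_singleton]
      constructor
      · exact hall v
      · rintro rfl; exact h0
    rw [hc, hfin]
    simp [h0]
  · have hmaxpos : 0 < maxL l := by omega
    classical
    set S := l.toFinset.filter (fun v => 0 < v) with hS
    have himg : (conjL l).toFinset = S.image (fun v => cntGT l (v - 1) - 1) := by
      ext x
      simp only [List.mem_toFinset, Finset.mem_image, hS, Finset.mem_filter]
      constructor
      · intro hx
        rw [conjL] at hx
        simp only [List.mem_map, List.mem_range] at hx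
        obtain ⟨k, hk, rfl⟩ := hx
        set T := l.toFinset.filter (fun q => k < q) with hT
        have hTne : T.Nonempty := by
          refine ⟨maxL l, ?_⟩
          rw [hT, Finset.mem_filter, List.mem_toFinset]
          exact ⟨maxL_mem hne, hk⟩
        set v := T.min' hTne with hv
        have hvT : v ∈ T := T.min'_mem hTne
        rw [hT, Finset.mem_filter, List.mem_toFinset] at hvT
        refine ⟨v, ⟨hvT.1, by omega⟩, ?_⟩
        have hcnt : cntGT l (v - 1) = cntGT l k := by
          rw [cntGT, cntGT]
          apply List.countP_congr
          intro q hql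
          simp only [decide_eq_true_eq]
          constructor
          · intro h; omega
          · intro h
            have hqT : q ∈ T := by
              rw [hT, Finset.mem_filter, List.mem_toFinset]; exact ⟨hql, h⟩
            have := T.min'_le q hqT
            omega
        rw [hcnt]
      · rintro ⟨v, ⟨hvl, hvpos⟩, rfl⟩
        rw [conjL]
        apply List.mem_map.2
        refine ⟨v - 1, List.mem_range.2 ?_, rfl⟩
        have := le_maxL hvl
        omega
    have hinj : Set.InjOn (fun v => cntGT l (v - 1) - 1) S := by
      intro a ha b hb hab
      simp only [Finset.coe_filter, Set.mem_setOf_eq, hS, Finset.mem_coe,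
        Finset.mem_filter, List.mem_toFinset] at ha hb
      by_contra hne'
      have key : ∀ v v' : ℕ, v ∈ l → 0 < v → v' ∈ l → 0 < v' → v < v' →
          cntGT l (v' - 1) - 1 < cntGT l (v - 1) - 1 := by
        intro v v' h1 h2 h3 h4 h5
        have hstrict := cntGT_strict h1 h2 h3 h5
        have : 1 ≤ cntGT l (v' - 1) := cntGT_pos h3 (by omega)
        omega
      rcases lt_trichotomy a b with h | h | h
      · have := key a b ha.1 ha.2 hb.1 hb.2 h
        simp only at hab
        omega
      · exact hne' h
      · have := key b a hb.1 hb.2 ha.1 ha.2 h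
        simp only at hab
        omega
    rw [himg, Finset.card_image_of_injOn hinj]
    have hsplit := Finset.card_filter_add_card_filter_not
      (s := l.toFinset) (p := fun v => 0 < v)
    have hneg : (l.toFinset.filter (fun v => ¬ 0 < v)).card
        = if (0:ℕ) ∈ l then 1 else 0 := by
      have : l.toFinset.filter (fun v => ¬ 0 < v) = if (0:ℕ) ∈ l then {0} else ∅ := by
        ext v
        simp only [Finset.mem_filter, List.mem_toFinset, not_lt, Nat.le_zero]
        split_ifs with h0
        · simp only [Finset.mem_singleton]
          constructor
          · rintro ⟨_, rfl⟩; rfl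
          · rintro rfl; exact ⟨h0, rfl⟩
        · simp only [Finset.notMem_empty, iff_false, not_and]
          rintro hvl rfl; exact h0 hvl
      rw [this]
      split_ifs <;> simp
    rw [← hsplit, hneg, hS]

/-! ### runs of `fL` -/

lemma runs_cons₂ (a b : ℕ) (t : List ℕ) :
    runs (a :: b :: t) = (if b + 1 < a then 1 else 0) + runs (b :: t) := by
  rw [runs]

lemma cntGT_zero_add_count (l : List ℕ) : cntGT l 0 + l.count 0 = l.length := by
  have := List.length_eq_countP_add_countP (fun q => decide (0 < q)) (l := l)
  rw [cntGT]
  have hc : l.countP (fun a => decide ¬(decide (0 < a)) = true) = l.count 0 := by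
    rw [List.count]
    apply List.countP_congr
    intro q hq
    cases q <;> simp
  omega

lemma runs_fL (l : List ℕ) : runs (fL l) = l.toFinset.card := by
  generalize hfuel : l.sum + l.length = fuel
  induction fuel using Nat.strong_induction_on generalizing l with
  | _ fuel ih =>
    subst hfuel
    rcases eq_or_ne l [] with rfl | hne
    · simp [runs]
    rw [fL_cons hne]
    by_cases hmax : maxL l = 0
    · have hc : conjL l = [] := by rw [conjL, hmax]; simp
      rw [hc]
      have hall : ∀ q ∈ l, q = 0 := fun q hq => by
        have := le_maxL hq; omega
      obtain ⟨q, hq⟩ := List.exists_mem_of_ne_nil l hne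
      have h0 : (0:ℕ) ∈ l := by rw [← hall q hq]; exact hq
      have hfin : l.toFinset = {0} := by
        ext v
        simp only [List.mem_toFinset, Finset.mem_singleton]
        constructor
        · exact hall v
        · rintro rfl; exact h0
      simp [runs, hfin]
    · have hmaxpos : 0 < maxL l := by omega
      have hcn : conjL l ≠ [] := conjL_ne_nil hmaxpos
      rw [fL_cons hcn, runs_cons₂, ← fL_cons hcn]
      have hIH : runs (fL (conjL l)) = (conjL l).toFinset.card :=
        ih _ (conjL_measure hne) (l := conjL l) rfl
      rw [hIH]
      have hdc := dcount_conjL l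
      have hhead : maxL (conjL l) + (conjL l).length = cntGT l 0 - 1 + maxL l := by
        rw [maxL_conjL hmaxpos, conjL_length]
      have hcnt1 : 1 ≤ cntGT l 0 := cntGT_pos (maxL_mem hne) hmaxpos
      have hcnt2 := cntGT_zero_add_count l
      have hmem : (0:ℕ) ∈ l ↔ 0 < l.count 0 := (List.count_pos_iff).symm
      by_cases h0 : (0:ℕ) ∈ l
      · have hcpos : 0 < l.count 0 := hmem.1 h0
        have hcond : maxL (conjL l) + (conjL l).length + 1 < maxL l + l.length := by omega
        rw [if_pos hcond]
        simp [h0] at hdc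
        omega
      · have hczero : l.count 0 = 0 := by
          by_contra hc0
          exact h0 (hmem.2 (by omega))
        have hcond : ¬ (maxL (conjL l) + (conjL l).length + 1 < maxL l + l.length) := by omega
        rw [if_neg hcond]
        simp [h0] at hdc
        omega

end Bess
namespace Bess

/-! ### generic sorted-list facts -/

local instance : Std.Antisymm (α := ℕ) (· > ·) := ⟨fun _ _ h h' => absurd h (not_lt.2 (le_of_lt h'))⟩

lemma sorted_gt_nodup {l : List ℕ} (h : l.Pairwise (· > ·)) : l.Nodup :=
  h.imp ne_of_gt

lemma eq_of_sorted_gt_mem {l1 l2 : List ℕ} (h1 : l1.Pairwise (· > ·)) (h2 : l2.Pairwise (· > ·))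
    (hm : ∀ x, x ∈ l1 ↔ x ∈ l2) : l1 = l2 := by
  apply List.Perm.eq_of_pairwise' h1 h2
  exact (List.perm_ext_iff_of_nodup (sorted_gt_nodup h1) (sorted_gt_nodup h2)).2 hm

/-! ### facts about `plist` and `dparts` -/

lemma plist_sorted {n : ℕ} (p : n.Partition) : (plist p).Pairwise (· ≥ ·) := by
  rw [plist, List.pairwise_reverse]
  exact (Multiset.pairwise_sort p.parts (· ≤ ·)).imp (fun h => h)

lemma mem_plist {n : ℕ} (p : n.Partition) (k : ℕ) : k ∈ plist p ↔ k ∈ p.parts := by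
  rw [plist, List.mem_reverse, Multiset.mem_sort]

lemma dparts_sorted {n : ℕ} (p : n.Partition) : (dparts p).Pairwise (· > ·) := by
  rw [dparts, List.pairwise_reverse]
  exact (Finset.sortedLT_sort _).pairwise.imp (fun h => h)

lemma mem_dparts {n : ℕ} (p : n.Partition) (k : ℕ) : k ∈ dparts p ↔ k ∈ p.parts := by
  rw [dparts, List.mem_reverse, Finset.mem_sort, Multiset.mem_toFinset]

lemma dparts_length {n : ℕ} (p : n.Partition) :
    (dparts p).length = p.parts.toFinset.card := by
  rw [dparts, List.length_reverse, Finset.length_sort]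

/-! ### `ddup`: removing adjacent duplicates -/

def ddup : List ℕ → List ℕ
  | [] => []
  | [a] => [a]
  | a :: b :: t => if a = b then ddup (b :: t) else a :: ddup (b :: t)

lemma ddup_cons_head : ∀ (t : List ℕ) (a : ℕ), ∃ t', ddup (a :: t) = a :: t' := by
  intro t
  induction t with
  | nil => exact fun a => ⟨[], by rw [ddup]⟩
  | cons b t2 ih =>
    intro a
    rw [ddup]
    by_cases hab : a = b
    · obtain ⟨t', ht'⟩ := ih b
      exact ⟨t', by rw [if_pos hab, ht', hab]⟩
    · exact ⟨ddup (b :: t2), by rw [if_neg hab]⟩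

lemma runs_ddup : ∀ (l : List ℕ), l.Pairwise (· ≥ ·) → runs (ddup l) = runs l := by
  intro l
  induction l with
  | nil => intro _; rw [ddup]
  | cons a t ih =>
    intro hs
    cases t with
    | nil => rw [ddup]
    | cons b t2 =>
      have hst : (b :: t2).Pairwise (· ≥ ·) := hs.of_cons
      have hba : b ≤ a := (List.pairwise_cons.1 hs).1 b (by simp)
      rw [ddup]
      by_cases hab : a = b
      · rw [if_pos hab, ih hst, runs_cons₂]
        have : ¬ (b + 1 < a) := by omega
        rw [if_neg this]
        omega
      · rw [if_neg hab]
        obtain ⟨t', ht'⟩ := ddup_cons_head t2 b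
        rw [ht', runs_cons₂, runs_cons₂, ← ht', ih hst]

lemma mem_ddup : ∀ (l : List ℕ) (x : ℕ), x ∈ ddup l ↔ x ∈ l := by
  intro l
  induction l with
  | nil => intro x; rw [ddup]
  | cons a t ih =>
    intro x
    cases t with
    | nil => rw [ddup]
    | cons b t2 =>
      rw [ddup]
      by_cases hab : a = b
      · rw [if_pos hab, ih x]
        subst hab
        simp only [List.mem_cons]
        tauto
      · rw [if_neg hab]
        simp only [List.mem_cons, ih x]

lemma ddup_sorted : ∀ (l : List ℕ), l.Pairwise (· ≥ ·) → (ddup l).Pairwise (· > ·) := by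
  intro l
  induction l with
  | nil => intro _; rw [ddup]; simp
  | cons a t ih =>
    intro hs
    cases t with
    | nil => rw [ddup]; simp
    | cons b t2 =>
      have hst : (b :: t2).Pairwise (· ≥ ·) := hs.of_cons
      have hba : b ≤ a := (List.pairwise_cons.1 hs).1 b (by simp)
      rw [ddup]
      by_cases hab : a = b
      · rw [if_pos hab]; exact ih hst
      · rw [if_neg hab]
        rw [List.pairwise_cons]
        refine ⟨?_, ih hst⟩
        intro x hx
        rw [mem_ddup] at hx
        rcases List.mem_cons.1 hx with rfl | hx2
        · omega
        · have := (List.pairwise_cons.1 hst).1 x hx2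
          omega

lemma dparts_eq_ddup_plist {n : ℕ} (p : n.Partition) : dparts p = ddup (plist p) := by
  apply eq_of_sorted_gt_mem (dparts_sorted p) (ddup_sorted _ (plist_sorted p))
  intro x
  rw [mem_dparts, mem_ddup, mem_plist]

lemma runs_plist_eq {n : ℕ} (p : n.Partition) : runs (plist p) = runs (dparts p) := by
  rw [dparts_eq_ddup_plist, runs_ddup _ (plist_sorted p)]

/-! ### `emul`: the multiset of an RP partition -/

def emul (r : ℕ) : ℕ → List ℕ → Multiset ℕ
  | _, [] => 0
  | j, e :: E => Multiset.replicate j e + emul r (r - j) E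

lemma mem_emul {r : ℕ} : ∀ (E : List ℕ) (j : ℕ), 0 < j → j < r →
    ∀ k, (k ∈ emul r j E ↔ k ∈ E) := by
  intro E
  induction E with
  | nil => intro j _ _ k; rw [emul]; simp
  | cons e E ih =>
    intro j hj hjr k
    rw [emul]
    simp only [Multiset.mem_add, Multiset.mem_replicate, List.mem_cons]
    rw [ih (r - j) (by omega) (by omega) k]
    constructor
    · rintro (⟨_, rfl⟩ | h)
      · exact Or.inl rfl
      · exact Or.inr h
    · rintro (rfl | h)
      · exact Or.inl ⟨by omega, rfl⟩
      · exact Or.inr h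

lemma sum_emul {r : ℕ} : ∀ (E : List ℕ) (j : ℕ), (emul r j E).sum = wsum r j E := by
  intro E
  induction E with
  | nil => intro j; rw [emul, wsum]; rfl
  | cons e E ih =>
    intro j
    rw [emul, wsum, Multiset.sum_add, Multiset.sum_replicate, ih]
    simp [smul_eq_mul]

lemma count_emul {r : ℕ} : ∀ (E : List ℕ) (j : ℕ), 0 < j → j < r → E.Pairwise (· > ·) →
    ∀ i (hi : i < E.length),
      (emul r j E).count E[i] = if i % 2 = 0 then j else r - j := by
  intro E
  induction E with
  | nil => intro j _ _ _ i hi; simp at hi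
  | cons e E ih =>
    intro j hj hjr hs i hi
    rw [emul]
    have hmemE : ∀ x ∈ E, x < e := fun x hx => (List.pairwise_cons.1 hs).1 x hx
    cases i with
    | zero =>
      simp only [List.getElem_cons_zero, Multiset.count_add, Multiset.count_replicate,
        if_pos rfl]
      have : e ∉ emul r (r - j) E := by
        rw [mem_emul E (r - j) (by omega) (by omega) e]
        intro hc
        exact absurd (hmemE e hc) (lt_irrefl e)
      rw [Multiset.count_eq_zero.2 this]
      simp
    | succ i2 =>
      have hi2 : i2 < E.length := by
        simp only [List.length_cons] at hi; omega
      simp only [List.getElem_cons_succ, Multiset.count_add, Multiset.count_replicate]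
      have hne : e ≠ E[i2] := by
        have := hmemE E[i2] (E.getElem_mem hi2)
        omega
      rw [if_neg hne]
      rw [ih (r - j) (by omega) (by omega) hs.of_cons i2 hi2]
      have hflip : r - (r - j) = j := by omega
      rw [hflip]
      rcases Nat.even_or_odd i2 with he | ho
      · have h1 : i2 % 2 = 0 := Nat.even_iff.1 he
        have h2 : (i2 + 1) % 2 ≠ 0 := by omega
        rw [if_pos h1, if_neg h2]
        omega
      · have h1 : i2 % 2 ≠ 0 := by
          have := Nat.odd_iff.1 ho; omega
        have h2 : (i2 + 1) % 2 = 0 := by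
          have := Nat.odd_iff.1 ho; omega
        rw [if_neg h1, if_pos h2]
        omega

end Bess
namespace Bess

variable {r j n m : ℕ}

/-! ### the list-level equivalence -/

def listEquiv (r j n m : ℕ) (hjr : j ≤ r) :
    {l : List ℕ // l.Pairwise (· ≥ ·) ∧ r * l.sum + j * l.length = n ∧ l.toFinset.card = m} ≃
    {E : List ℕ // E.Pairwise (· > ·) ∧ (∀ e ∈ E, 0 < e) ∧ wsum r j E = n ∧ runs E = m} where
  toFun l := ⟨fL l.1, fL_sorted l.1, fL_pos l.1, by
      rw [wsum_fL l.1 j hjr]; exact l.2.2.1, by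
      rw [runs_fL l.1]; exact l.2.2.2⟩
  invFun E := ⟨gL E.1, gL_sorted E.1, by
      rw [← wsum_fL (gL E.1) j hjr, fL_gL E.2.1 E.2.2.1]; exact E.2.2.2.1, by
      rw [← runs_fL (gL E.1), fL_gL E.2.1 E.2.2.1]; exact E.2.2.2.2⟩
  left_inv l := Subtype.ext (gL_fL l.2.1)
  right_inv E := Subtype.ext (fL_gL E.2.1 E.2.2.1)

/-! ### CP interface -/

lemma msum_map (r j : ℕ) (Q : Multiset ℕ) :
    (Q.map (fun q => r * q + j)).sum = r * Q.sum + j * Multiset.card Q := by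
  induction Q using Multiset.induction_on with
  | empty => simp
  | cons a Q ih =>
    simp only [Multiset.map_cons, Multiset.sum_cons, ih, Multiset.sum_cons,
      Multiset.card_cons]
    ring

lemma map_roundtrip (s : Multiset ℕ) (f g : ℕ → ℕ) (h : ∀ k ∈ s, f (g k) = k) :
    (s.map g).map f = s := by
  rw [Multiset.map_map]
  calc s.map (f ∘ g) = s.map id := Multiset.map_congr rfl (fun k hk => h k hk)
    _ = s := Multiset.map_id s

lemma inj_rqj (hr : 0 < r) : Function.Injective (fun q : ℕ => r * q + j) := by
  intro a b hab
  simp only at hab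
  have : r * a = r * b := by omega
  exact Nat.eq_of_mul_eq_mul_left hr this

def cpEquiv1 (r j n m : ℕ) (hr : 0 < r) (hj1 : 1 ≤ j) (hjr : j < r) :
    {p : n.Partition // (∀ k ∈ p.parts, k % r = j) ∧ p.parts.toFinset.card = m} ≃
    {Q : Multiset ℕ // r * Q.sum + j * Multiset.card Q = n ∧ Q.toFinset.card = m} where
  toFun p := by
    refine ⟨p.1.parts.map (fun k => k / r), ?_, ?_⟩
    · have hmap : (p.1.parts.map (fun k => k / r)).map (fun q => r * q + j) = p.1.parts := by
        apply map_roundtrip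
        intro k hk
        have hmod := p.2.1 k hk
        have := Nat.div_add_mod k r
        omega
      calc r * (p.1.parts.map (fun k => k / r)).sum
            + j * Multiset.card (p.1.parts.map (fun k => k / r))
          = ((p.1.parts.map (fun k => k / r)).map (fun q => r * q + j)).sum := by
            rw [msum_map]
        _ = p.1.parts.sum := by rw [hmap]
        _ = n := p.1.parts_sum
    · have hmap : (p.1.parts.map (fun k => k / r)).map (fun q => r * q + j) = p.1.parts := by
        apply map_roundtrip
        intro k hk
        have hmod := p.2.1 k hk
        have := Nat.div_add_mod k r
        omega
      have := congrArg (fun s : Multiset ℕ => s.toFinset.card) hmap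
      rw [Multiset.toFinset_map, Finset.card_image_of_injOn
        (Set.injOn_of_injective (inj_rqj hr))] at this
      rw [this]
      exact p.2.2
  invFun Q := by
    refine ⟨⟨Q.1.map (fun q => r * q + j), ?_, ?_⟩, ?_, ?_⟩
    · intro k hk
      rw [Multiset.mem_map] at hk
      obtain ⟨q, _, rfl⟩ := hk
      omega
    · rw [msum_map]; exact Q.2.1
    · intro k hk
      rw [Multiset.mem_map] at hk
      obtain ⟨q, _, rfl⟩ := hk
      rw [Nat.mul_add_mod]
      exact Nat.mod_eq_of_lt hjr
    · dsimp only
      rw [Multiset.toFinset_map, Finset.card_image_of_injOn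
        (Set.injOn_of_injective (inj_rqj hr))]
      exact Q.2.2
  left_inv p := by
    apply Subtype.ext
    apply Nat.Partition.ext
    dsimp only
    apply map_roundtrip
    intro k hk
    have hmod := p.2.1 k hk
    have := Nat.div_add_mod k r
    omega
  right_inv Q := by
    apply Subtype.ext
    dsimp only
    apply map_roundtrip
    intro q _
    rw [Nat.mul_add_div hr, Nat.div_eq_of_lt hjr]
    omega

def cpEquiv2 (r j n m : ℕ) :
    {Q : Multiset ℕ // r * Q.sum + j * Multiset.card Q = n ∧ Q.toFinset.card = m} ≃
    {l : List ℕ // l.Pairwise (· ≥ ·) ∧ r * l.sum + j * l.length = n ∧ l.toFinset.card = m} where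
  toFun Q := by
    refine ⟨(Q.1.sort (· ≤ ·)).reverse, ?_, ?_, ?_⟩
    · rw [List.pairwise_reverse]
      exact (Multiset.pairwise_sort Q.1 (· ≤ ·)).imp (fun h => h)
    · have hsum : (Q.1.sort (· ≤ ·)).reverse.sum = Q.1.sum := by
        rw [List.sum_reverse, ← Multiset.sum_coe, Multiset.sort_eq]
      have hlen : (Q.1.sort (· ≤ ·)).reverse.length = Multiset.card Q.1 := by
        rw [List.length_reverse, Multiset.length_sort]
      rw [hsum, hlen]; exact Q.2.1
    · have : (Q.1.sort (· ≤ ·)).reverse.toFinset = Q.1.toFinset := by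
        rw [List.toFinset_reverse, ← List.toFinset_coe, Multiset.sort_eq]
      rw [this]; exact Q.2.2
  invFun l := by
    refine ⟨(l.1 : Multiset ℕ), ?_, ?_⟩
    · rw [Multiset.sum_coe, Multiset.coe_card]
      exact l.2.2.1
    · rw [List.toFinset_coe]
      exact l.2.2.2
  left_inv Q := by
    apply Subtype.ext
    dsimp only
    rw [Multiset.coe_reverse, Multiset.sort_eq]
  right_inv l := by
    apply Subtype.ext
    dsimp only
    have hperm : ((l.1 : Multiset ℕ).sort (· ≤ ·)).Perm l.1.reverse := by
      rw [← Multiset.coe_eq_coe, Multiset.sort_eq, Multiset.coe_reverse]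
    have hs1 : ((l.1 : Multiset ℕ).sort (· ≤ ·)).Pairwise (· ≤ ·) :=
      Multiset.pairwise_sort _ _
    have hs2 : (l.1.reverse).Pairwise (· ≤ ·) :=
      List.pairwise_reverse.2 (l.2.1.imp (fun h => h))
    rw [List.Perm.eq_of_pairwise' hs1 hs2 hperm, List.reverse_reverse]

/-! ### RP interface -/

def rpEquiv (r j n m : ℕ) (hj1 : 0 < j) (hjr : j < r) :
    {p : n.Partition // RPpat r j p ∧ runs (plist p) = m} ≃
    {E : List ℕ // E.Pairwise (· > ·) ∧ (∀ e ∈ E, 0 < e) ∧ wsum r j E = n ∧ runs E = m} where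
  toFun p := by
    refine ⟨dparts p.1, dparts_sorted p.1, ?_, ?_, ?_⟩
    · intro e he
      exact p.1.parts_pos ((mem_dparts p.1 e).1 he)
    · have hemul : emul r j (dparts p.1) = p.1.parts := by
        apply Multiset.ext.2
        intro k
        by_cases hk : k ∈ dparts p.1
        · obtain ⟨i, hi, rfl⟩ := List.mem_iff_getElem.1 hk
          rw [count_emul (dparts p.1) j hj1 hjr (dparts_sorted p.1) i hi]
          have := p.2.1 i hi
          rw [List.getD_eq_getElem _ _ hi] at this
          rw [this]
        · rw [Multiset.count_eq_zero.2, Multiset.count_eq_zero.2]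
          · intro hc
            exact hk ((mem_dparts p.1 k).2 hc)
          · intro hc
            exact hk ((mem_emul (dparts p.1) j hj1 hjr k).1 hc)
      rw [← sum_emul, hemul]
      exact p.1.parts_sum
    · rw [← runs_plist_eq]
      exact p.2.2
  invFun E := by
    have hpos : ∀ k ∈ emul r j E.1, 0 < k := by
      intro k hk
      exact E.2.2.1 k ((mem_emul E.1 j hj1 hjr k).1 hk)
    have hsum : (emul r j E.1).sum = n := by
      rw [sum_emul]; exact E.2.2.2.1
    refine ⟨⟨emul r j E.1, fun {k} hk => hpos k hk, hsum⟩, ?_, ?_⟩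
    · have hdp : dparts (⟨emul r j E.1, fun {k} hk => hpos k hk, hsum⟩ : n.Partition) = E.1 := by
        apply eq_of_sorted_gt_mem (dparts_sorted _) E.2.1
        intro x
        rw [mem_dparts]
        exact mem_emul E.1 j hj1 hjr x
      intro i hi
      rw [hdp] at hi ⊢
      rw [List.getD_eq_getElem _ _ hi]
      exact count_emul E.1 j hj1 hjr E.2.1 i hi
    · have hdp : dparts (⟨emul r j E.1, fun {k} hk => hpos k hk, hsum⟩ : n.Partition) = E.1 := by
        apply eq_of_sorted_gt_mem (dparts_sorted _) E.2.1
        intro x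
        rw [mem_dparts]
        exact mem_emul E.1 j hj1 hjr x
      rw [runs_plist_eq, hdp]
      exact E.2.2.2.2
  left_inv p := by
    apply Subtype.ext
    apply Nat.Partition.ext
    dsimp only
    apply Multiset.ext.2
    intro k
    by_cases hk : k ∈ dparts p.1
    · obtain ⟨i, hi, rfl⟩ := List.mem_iff_getElem.1 hk
      rw [count_emul (dparts p.1) j hj1 hjr (dparts_sorted p.1) i hi]
      have := p.2.1 i hi
      rw [List.getD_eq_getElem _ _ hi] at this
      rw [this]
    · rw [Multiset.count_eq_zero.2, Multiset.count_eq_zero.2]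
      · intro hc
        exact hk ((mem_dparts p.1 k).2 hc)
      · intro hc
        exact hk ((mem_emul (dparts p.1) j hj1 hjr k).1 hc)
  right_inv E := by
    apply Subtype.ext
    dsimp only
    apply eq_of_sorted_gt_mem (dparts_sorted _) E.2.1
    intro x
    rw [mem_dparts]
    exact mem_emul E.1 j hj1 hjr x

end Bess

theorem bessenrodt_refined (r j : ℕ) (hr : 2 ≤ r) (hj1 : 1 ≤ j) (hj2 : j ≤ r - 1)
    (n m : ℕ) (hm : 1 ≤ m) :
    Nat.card {p : n.Partition // (∀ k ∈ p.parts, k % r = j) ∧ p.parts.toFinset.card = m} =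
    Nat.card {p : n.Partition // RPpat r j p ∧ runs (plist p) = m} := by
  have hjr : j < r := by omega
  exact Nat.card_congr
    ((((Bess.cpEquiv1 r j n m (by omega) hj1 hjr).trans (Bess.cpEquiv2 r j n m)).trans
      (Bess.listEquiv r j n m (by omega))).trans (Bess.rpEquiv r j n m (by omega) hjr).symm)
end
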